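/- Let Φ be an irreducible root system in a finite-dimensional real inner product space V, let H ⊆ V be a hyperplane (a linear subspace of codimension 1), and let α ∈ Φ ∩ H. Then α has a neighbor in Φ ∖ H, i.e. there exists β ∈ Φ ∖ H such that α and β are linearly independent, non-orthogonal, and no root of Φ lies in the open cone ℝ_{>0}α + ℝ_{>0}β. -/

import Mathlib

open scoped RealInnerProductSpace

/-- A (crystallographic, not necessarily reduced or irreducible) root system
in a real inner product space: a finite set of nonzero vectors spanning the
space, closed under the associated reflections, with integral Cartan numbers. -/
structure IsRootSystem {V : Type*} [NormedAddCommGroup V] [InnerProductSpace ℝ V]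
    (Φ : Set V) : Prop where
  finite : Φ.Finite
  ne_zero : ∀ α ∈ Φ, α ≠ 0
  span_eq_top : Submodule.span ℝ Φ = ⊤
  reflect_mem : ∀ α ∈ Φ, ∀ β ∈ Φ, β - (2 * ⟪β, α⟫ / ⟪α, α⟫) • α ∈ Φ
  crystallographic : ∀ α ∈ Φ, ∀ β ∈ Φ, ∃ n : ℤ, 2 * ⟪β, α⟫ / ⟪α, α⟫ = (n : ℝ)

/-- A root system is irreducible if it is nonempty and cannot be written as a
union of two nonempty mutually orthogonal subsets. -/
def IsIrreducibleRootSet {V : Type*} [NormedAddCommGroup V] [InnerProductSpace ℝ V]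
    (Φ : Set V) : Prop :=
  Φ.Nonempty ∧
    ¬∃ Φ₁ Φ₂ : Set V, Φ₁.Nonempty ∧ Φ₂.Nonempty ∧ Φ = Φ₁ ∪ Φ₂ ∧
      ∀ α ∈ Φ₁, ∀ β ∈ Φ₂, ⟪α, β⟫ = 0

/-- Two roots are neighbors if they are linearly independent, non-orthogonal,
and no root lies in the open cone spanned by them. -/
def IsNeighbor {V : Type*} [NormedAddCommGroup V] [InnerProductSpace ℝ V]
    (Φ : Set V) (α β : V) : Prop :=
  LinearIndependent ℝ ![α, β] ∧ ⟪α, β⟫ ≠ 0 ∧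
    ¬∃ γ ∈ Φ, ∃ a b : ℝ, 0 < a ∧ 0 < b ∧ γ = a • α + b • β

/-- A root system contains the negative of each of its roots. -/
lemma IsRootSystem.neg_mem {V : Type*} [NormedAddCommGroup V] [InnerProductSpace ℝ V]
    {Φ : Set V} (hΦ : IsRootSystem Φ) {γ : V} (hγ : γ ∈ Φ) : -γ ∈ Φ := by
  have hne : ⟪γ, γ⟫ ≠ 0 := by
    simpa [inner_self_eq_zero] using hΦ.ne_zero γ hγ
  have h := hΦ.reflect_mem γ hγ γ hγ
  have hc : 2 * ⟪γ, γ⟫ / ⟪γ, γ⟫ = 2 := by field_simp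
  rw [hc] at h
  have : γ - (2 : ℝ) • γ = -γ := by module
  rwa [this] at h

/-- Key connectivity step: in an irreducible root system there is a root
non-orthogonal to `α` on which `g` does not vanish. -/
lemma exists_nonortho_off_hyperplane {V : Type*} [NormedAddCommGroup V]
    [InnerProductSpace ℝ V] {Φ : Set V} (hΦ : IsRootSystem Φ)
    (hirr : IsIrreducibleRootSet Φ) (g : V →ₗ[ℝ] ℝ) (hg : g ≠ 0) {α : V}
    (hα : α ∈ Φ) (hαH : g α = 0) : ∃ β ∈ Φ, g β ≠ 0 ∧ ⟪α, β⟫ ≠ 0 := by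
  by_contra hcon
  push_neg at hcon
  -- the "hyperplane adjacency" relation
  set r : V → V → Prop := fun x y => y ∈ Φ ∧ g y = 0 ∧ ⟪x, y⟫ ≠ 0 with hr
  -- every root reachable from α inside the hyperplane is orthogonal to all
  -- roots off the hyperplane
  have key : ∀ γ, Relation.ReflTransGen r α γ →
      γ ∈ Φ ∧ g γ = 0 ∧ ∀ δ ∈ Φ, g δ ≠ 0 → ⟪γ, δ⟫ = 0 := by
    intro γ h
    induction h with
    | refl => exact ⟨hα, hαH, hcon⟩
    | @tail b c h1 h2 ih =>
      obtain ⟨hcΦ, hcH, hbc⟩ := h2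
      refine ⟨hcΦ, hcH, ?_⟩
      intro δ hδ hgδ
      by_contra hne
      have hcc : ⟪c, c⟫ ≠ 0 := by
        simpa [inner_self_eq_zero] using hΦ.ne_zero c hcΦ
      set k := 2 * ⟪δ, c⟫ / ⟪c, c⟫ with hk
      have hk0 : k ≠ 0 := by
        apply div_ne_zero _ hcc
        apply mul_ne_zero two_ne_zero
        rwa [real_inner_comm]
      have hmem : δ - k • c ∈ Φ := hΦ.reflect_mem c hcΦ δ hδ
      have hgδ' : g (δ - k • c) ≠ 0 := by
        simpa [map_sub, map_smul, hcH] using hgδ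
      have horth := ih.2.2 _ hmem hgδ'
      have hbδ : ⟪b, δ⟫ = 0 := ih.2.2 δ hδ hgδ
      rw [inner_sub_right, real_inner_smul_right, hbδ] at horth
      have : ⟪b, c⟫ = 0 := by
        have := horth
        rcases mul_eq_zero.mp (by linarith : k * ⟪b, c⟫ = 0) with h' | h'
        · exact absurd h' hk0
        · exact h'
      exact hbc this
  -- derive a contradiction with irreducibility
  have hsub : {γ | Relation.ReflTransGen r α γ} ⊆ Φ := fun γ h => (key γ h).1
  have hex : ∃ δ ∈ Φ, g δ ≠ 0 := by
    by_contra h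
    push_neg at h
    apply hg
    have hle : Submodule.span ℝ Φ ≤ LinearMap.ker g :=
      Submodule.span_le.2 fun x hx => h x hx
    rw [hΦ.span_eq_top] at hle
    exact LinearMap.ker_eq_top.mp (top_le_iff.mp hle)
  obtain ⟨δ₀, hδ₀Φ, hgδ₀⟩ := hex
  apply hirr.2
  refine ⟨{γ | Relation.ReflTransGen r α γ},
    Φ \ {γ | Relation.ReflTransGen r α γ}, ⟨α, Relation.ReflTransGen.refl⟩,
    ⟨δ₀, hδ₀Φ, fun h => hgδ₀ (key δ₀ h).2.1⟩,
    (Set.union_diff_cancel hsub).symm, ?_⟩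
  intro x hx y hy
  by_contra h0
  rcases eq_or_ne (g y) 0 with hgy | hgy
  · exact hy.2 (Relation.ReflTransGen.tail hx ⟨hy.1, hgy, h0⟩)
  · exact h0 ((key x hx).2.2 y hy.1 hgy)

/-- If `Φ` is an irreducible root system, `H` a hyperplane (the kernel of a
nonzero linear functional) and `α ∈ Φ ∩ H`, then `α` has a neighbor in
`Φ ∖ H`. -/
theorem exists_neighbor_not_mem_hyperplane
    {V : Type*} [NormedAddCommGroup V] [InnerProductSpace ℝ V] [FiniteDimensional ℝ V]
    {Φ : Set V} (hΦ : IsRootSystem Φ) (hirr : IsIrreducibleRootSet Φ)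
    (g : V →ₗ[ℝ] ℝ) (hg : g ≠ 0) {α : V} (hα : α ∈ Φ) (hαH : g α = 0) :
    ∃ β ∈ Φ, g β ≠ 0 ∧ IsNeighbor Φ α β := by
  classical
  obtain ⟨β₀, hβ₀Φ, hgβ₀, hαβ₀⟩ :=
    exists_nonortho_off_hyperplane hΦ hirr g hg hα hαH
  -- normalize so that ⟪α, β₁⟫ > 0
  obtain ⟨β₁, hβ₁Φ, hgβ₁, hαβ₁⟩ : ∃ β₁ ∈ Φ, g β₁ ≠ 0 ∧ 0 < ⟪α, β₁⟫ := by
    rcases hαβ₀.lt_or_gt with h | h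
    · refine ⟨-β₀, hΦ.neg_mem hβ₀Φ, by simpa using hgβ₀, ?_⟩
      rw [inner_neg_right]; linarith
    · exact ⟨β₀, hβ₀Φ, hgβ₀, h⟩
  have hαne : α ≠ 0 := hΦ.ne_zero α hα
  -- α and β₁ are linearly independent (in the coordinate sense)
  have hind : ∀ s t : ℝ, s • α + t • β₁ = 0 → s = 0 ∧ t = 0 := by
    intro s t h
    have hg' := congrArg g h
    simp only [map_add, map_smul, hαH, map_zero, smul_eq_mul, mul_zero, zero_add] at hg'
    have ht : t = 0 := by
      rcases mul_eq_zero.mp hg' with h' | h'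
      · exact h'
      · exact absurd h' hgβ₁
    subst ht
    rw [zero_smul, add_zero, smul_eq_zero] at h
    exact ⟨h.resolve_right hαne, rfl⟩
  -- the set of coordinates of roots on the β₁-side of the plane spanned by α, β₁
  set C : Set (ℝ × ℝ) := {p | 0 < p.2 ∧ p.1 • α + p.2 • β₁ ∈ Φ} with hC
  have hCinj : Set.InjOn (fun p : ℝ × ℝ => p.1 • α + p.2 • β₁) C := by
    intro p _ q _ hpq
    have : (p.1 - q.1) • α + (p.2 - q.2) • β₁ = 0 := by
      simp only at hpq
      rw [sub_smul, sub_smul]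
      rw [← sub_eq_zero] at hpq
      rw [← hpq]; module
    obtain ⟨h1, h2⟩ := hind _ _ this
    have := sub_eq_zero.mp h1
    have := sub_eq_zero.mp h2
    exact Prod.ext (sub_eq_zero.mp h1) (sub_eq_zero.mp h2)
  have hCfin : C.Finite := by
    apply Set.Finite.of_finite_image _ hCinj
    exact hΦ.finite.subset (by rintro x ⟨p, hp, rfl⟩; exact hp.2)
  have hCne : C.Nonempty := ⟨(0, 1), by simp [hC, hβ₁Φ]⟩
  obtain ⟨p, hp, hmax⟩ : ∃ p ∈ C, ∀ q ∈ C, p.1 / p.2 ≤ q.1 / q.2 →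
      p.1 / p.2 = q.1 / q.2 := by
    obtain ⟨i, hi, hmx⟩ := Set.Finite.exists_maximalFor (fun p : ℝ × ℝ => p.1 / p.2) C hCfin hCne
    exact ⟨i, hi, fun q hq h => le_antisymm h (hmx hq h)⟩
  obtain ⟨hb, hβΦ⟩ := hp
  -- the chosen neighbor
  refine ⟨p.1 • α + p.2 • β₁, hβΦ, ?_, ?_, ?_, ?_⟩
  · -- off the hyperplane
    simp only [map_add, map_smul, hαH, smul_eq_mul, mul_zero, zero_add]
    exact mul_ne_zero (ne_of_gt hb) hgβ₁
  · -- linear independence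
    rw [LinearIndependent.pair_iff]
    intro s t hst
    have : (s + t * p.1) • α + (t * p.2) • β₁ = 0 := by
      rw [← hst]; module
    obtain ⟨h1, h2⟩ := hind _ _ this
    have ht : t = 0 := by
      rcases mul_eq_zero.mp h2 with h' | h'
      · exact h'
      · exact absurd h' (ne_of_gt hb)
    subst ht
    constructor
    · linarith [h1]
    · rfl
  · -- non-orthogonality: in fact ⟪α, β⟫ > 0 since p.1 ≥ 0
    have hp1 : 0 ≤ p.1 := by
      by_contra hneg
      push_neg at hneg
      have h01 : ((0 : ℝ), (1 : ℝ)) ∈ C := by simp [hC, hβ₁Φ]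
      have hle : p.1 / p.2 ≤ (0 : ℝ) / 1 := by
        rw [zero_div]
        exact le_of_lt (div_neg_of_neg_of_pos hneg hb)
      have := hmax ((0 : ℝ), 1) h01 hle
      simp only [zero_div] at this
      rw [div_eq_zero_iff] at this
      rcases this with h' | h'
      · exact absurd h' (ne_of_lt hneg)
      · exact absurd h' (ne_of_gt hb)
    have : ⟪α, p.1 • α + p.2 • β₁⟫ = p.1 * ⟪α, α⟫ + p.2 * ⟪α, β₁⟫ := by
      rw [inner_add_right, real_inner_smul_right, real_inner_smul_right]
    rw [this]
    have hαα : 0 < ⟪α, α⟫ := lt_of_le_of_ne real_inner_self_nonneg (Ne.symm (fun h => hαne (inner_self_eq_zero.mp h)))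
    have : 0 < p.1 * ⟪α, α⟫ + p.2 * ⟪α, β₁⟫ := by
      have h1 : 0 ≤ p.1 * ⟪α, α⟫ := mul_nonneg hp1 (le_of_lt hαα)
      have h2 : 0 < p.2 * ⟪α, β₁⟫ := mul_pos hb hαβ₁
      linarith
    exact ne_of_gt this
  · -- no root in the open cone
    rintro ⟨γ, hγΦ, a', b', ha', hb', rfl⟩
    have hq : ((a' + b' * p.1, b' * p.2) : ℝ × ℝ) ∈ C := by
      refine ⟨mul_pos hb' hb, ?_⟩
      have : (a' + b' * p.1) • α + (b' * p.2) • β₁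
          = a' • α + b' • (p.1 • α + p.2 • β₁) := by module
      rw [this]
      exact hγΦ
    have hlt : p.1 / p.2 < (a' + b' * p.1) / (b' * p.2) := by
      rw [div_lt_div_iff₀ hb (mul_pos hb' hb)]
      nlinarith
    have := hmax _ hq (le_of_lt hlt)
    rw [this] at hlt
    exact lt_irrefl _ hlt
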